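/- For any τ₀ in the subgroup ⟨Θ⟩_{M(G)} of the Miller Machine M(G), there exist words w and ε over X such that ε =_G 1, τ₀ q τ₀⁻¹ =_{M(G)} w⁻¹ q w ε, and ‖w‖ ≤ ‖τ₀‖ (where ‖τ₀‖ is the length of τ₀ in the free group ⟨Θ⟩_{M(G)}). Consequently, τ₀ q⁻¹ τ₀⁻¹ =_{M(G)} (wε)⁻¹ q⁻¹ w for the same w and ε. -/

import Mathlib

/-!
Common setup: a finitely presented group `G = ⟨X ∣ R⟩` (`X` a finite set, `R` a finite
nonempty set of words of the free group `F(X)`) and its Miller machine `M(G)`,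
the group generated by `X ∪ Θ ∪ {q}`, where `Θ = {θ_α : α ∈ X ∪ R}`, subject to
the relations `θ_α x = x θ_α` (`x ∈ X`, `α ∈ X ∪ R`), `θ_x x q = q x θ_x` (`x ∈ X`)
and `θ_r q = q r θ_r` (`r ∈ R`).
-/

namespace Miller

noncomputable section

/-- Index type for the letters `Θ`: one letter `θ_α` for each `α ∈ X ∪ R`
(since `X ∩ R = ∅`, the disjoint sum is faithful). -/
abbrev ThIdx (X : Type) (R : Finset (FreeGroup X)) : Type := X ⊕ {r : FreeGroup X // r ∈ R}

/-- The generators of the Miller machine: the letters of `X`, the letters `Θ`, and `q`. -/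
abbrev Gen (X : Type) (R : Finset (FreeGroup X)) : Type := X ⊕ (ThIdx X R ⊕ Unit)

variable (X : Type) (R : Finset (FreeGroup X))

/-- The letter `x ∈ X`, as a word on the generators of `M(G)`. -/
def xg (x : X) : FreeGroup (Gen X R) := FreeGroup.of (Sum.inl x)

/-- The letter `θ_α`, as a word on the generators of `M(G)`. -/
def θg (a : ThIdx X R) : FreeGroup (Gen X R) := FreeGroup.of (Sum.inr (Sum.inl a))

/-- The letter `q`, as a word on the generators of `M(G)`. -/
def qg : FreeGroup (Gen X R) := FreeGroup.of (Sum.inr (Sum.inr ()))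

/-- A word on `X` is in particular a word on the generators of `M(G)`. -/
def ofX : FreeGroup X →* FreeGroup (Gen X R) := FreeGroup.map Sum.inl

/-- The defining relators of the Miller machine `M(G)`. -/
def rels : Set (FreeGroup (Gen X R)) :=
  {w | (∃ (a : ThIdx X R) (x : X),
          w = θg X R a * xg X R x * (xg X R x * θg X R a)⁻¹) ∨
       (∃ x : X,
          w = θg X R (Sum.inl x) * xg X R x * qg X R *
              (qg X R * xg X R x * θg X R (Sum.inl x))⁻¹) ∨
       (∃ r : {r : FreeGroup X // r ∈ R},
          w = θg X R (Sum.inr r) * qg X R *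
              (qg X R * ofX X R r.1 * θg X R (Sum.inr r))⁻¹)}

/-- The group `G = ⟨X ∣ R⟩`. -/
abbrev G := PresentedGroup (R : Set (FreeGroup X))

/-- The Miller machine `M(G)`. -/
abbrev M := PresentedGroup (rels X R)

/-- The element of `G` represented by a word on `X`. -/
def toG : FreeGroup X →* G X R := PresentedGroup.mk _

/-- The element of `M(G)` represented by a word on the generators. -/
def toM : FreeGroup (Gen X R) →* M X R := PresentedGroup.mk _

/-- The element of `M(G)` represented by a word on `X`. -/
def embX : FreeGroup X →* M X R := (toM X R).comp (ofX X R)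

/-- The element of `M(G)` represented by a word on `Θ`. -/
def embTh : FreeGroup (ThIdx X R) →* M X R :=
  (toM X R).comp (FreeGroup.map fun a => Sum.inr (Sum.inl a))

/-- The generator `x ∈ X` as element of `M(G)`. -/
def xM (x : X) : M X R := toM X R (xg X R x)

/-- The generator `θ_α` as element of `M(G)`. -/
def θM (a : ThIdx X R) : M X R := toM X R (θg X R a)

/-- The generator `q` as element of `M(G)`. -/
def qM : M X R := toM X R (qg X R)

/-- The subgroup `⟨X, q⟩` of `M(G)`. -/
def XqSub : Subgroup (M X R) := Subgroup.closure (Set.range (xM X R) ∪ {qM X R})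

/-- The subgroup `⟨Θ⟩` of `M(G)`. -/
def ThSub : Subgroup (M X R) := Subgroup.closure (Set.range (θM X R))

/-- The subgroup `H = ⟨X ∪ Θ⟩` of `M(G)`. -/
def Hgrp : Subgroup (M X R) := Subgroup.closure (Set.range (xM X R) ∪ Set.range (θM X R))

/-- The subgroup `K₋₁ = ⟨{θ_x x : x ∈ X} ∪ {θ_r : r ∈ R}⟩` of `M(G)`. -/
def Kneg : Subgroup (M X R) := Subgroup.closure
  ((Set.range fun x : X => θM X R (Sum.inl x) * xM X R x) ∪
   (Set.range fun r : {r : FreeGroup X // r ∈ R} => θM X R (Sum.inr r)))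

/-- The subgroup `K₁ = ⟨{θ_x x : x ∈ X} ∪ {θ_r r : r ∈ R}⟩` of `M(G)`. -/
def Kpos : Subgroup (M X R) := Subgroup.closure
  ((Set.range fun x : X => θM X R (Sum.inl x) * xM X R x) ∪
   (Set.range fun r : {r : FreeGroup X // r ∈ R} => θM X R (Sum.inr r) * embX X R r.1))

/-- `‖g‖`: the (reduced) word length of an element of a free group. -/
def wlen {β : Type} (g : FreeGroup β) : ℕ :=
  sInf {n | ∃ l : List (β × Bool), FreeGroup.mk l = g ∧ l.length = n}

/-- `|g|`: word length in `M(G)` with respect to the generating set `X ∪ Θ ∪ {q}`. -/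
def mlen (g : M X R) : ℕ :=
  sInf {n | ∃ w : FreeGroup (Gen X R), toM X R w = g ∧ wlen w = n}

/-- `c(u,v)`: the minimal length of a conjugator taking `u` to `v` in `M(G)`. -/
def c (u v : M X R) : ℕ :=
  sInf {n | ∃ γ : M X R, γ * u * γ⁻¹ = v ∧ mlen X R γ = n}

/-- `c'(u,v)`: the minimal length of a conjugator in `⟨X ∪ Θ⟩` taking `u` to `v`. -/
def c' (u v : M X R) : ℕ :=
  sInf {n | ∃ γ ∈ Hgrp X R, γ * u * γ⁻¹ = v ∧ mlen X R γ = n}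

/-- The product `∏_{i<m} w_i r_i w_i⁻¹`. -/
def prodConj (m : ℕ) (w r : ℕ → FreeGroup X) : FreeGroup X :=
  ((List.range m).map fun i => w i * r i * (w i)⁻¹).prod

/-- `r_0, …, r_{m-1} ∈ R^{±1}`. -/
def IsRelSeq (m : ℕ) (r : ℕ → FreeGroup X) : Prop := ∀ i < m, r i ∈ R ∨ (r i)⁻¹ ∈ R

/-- `δ(g)`: the least `m` such that `g` is freely equal to a product of `m`
conjugates of elements of `R^{±1}`. -/
def area (g : FreeGroup X) : ℕ :=
  sInf {m | ∃ w r : ℕ → FreeGroup X, IsRelSeq X R m r ∧ g = prodConj X m w r}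

/-- The Dehn function `Δ` of the presentation `⟨X ∣ R⟩`. -/
def Dehn (n : ℕ) : ℕ :=
  sSup {d | ∃ g : FreeGroup X, wlen g ≤ n ∧ toG X R g = 1 ∧ area X R g = d}

/-- `f(w) = m + ‖w₁‖ + ‖w_m‖ + ∑_{i=1}^{m-1} ‖w_i⁻¹ w_{i+1}‖` (with `0`-based indexing). -/
def fval (m : ℕ) (w : ℕ → FreeGroup X) : ℕ :=
  m + wlen (w 0) + wlen (w (m - 1)) + ∑ i ∈ Finset.range (m - 1), wlen ((w i)⁻¹ * w (i + 1))

/-- `λ(g)`: the minimum of `f(w)` over expressions `w = ∏ w_i r_i w_i⁻¹` freely equal to `g`. -/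
def lam (g : FreeGroup X) : ℕ :=
  sInf {n | ∃ (m : ℕ) (w r : ℕ → FreeGroup X),
    1 ≤ m ∧ IsRelSeq X R m r ∧ g = prodConj X m w r ∧ fval X m w = n}

/-- `Λ(n)`: the maximum of `λ(g)` over words `g` with `g =_G 1` and `‖g‖ ≤ n`. -/
def Lam (n : ℕ) : ℕ :=
  sSup {d | ∃ g : FreeGroup X, wlen g ≤ n ∧ toG X R g = 1 ∧ lam X R g = d}

/-- `t = max({‖r‖ : r ∈ R} ∪ {2})`. -/
def t : ℕ := max (R.sup fun r => wlen r) 2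

/-- `w, ε` witness the iso-computational list conjugacy `u ∼^σ v` (indices `0,…,k-1`,
with the convention that the index after `k-1` is `0`, i.e. `σ_{k+1} = σ₁`). -/
def IsICLCWitness (k : ℕ) (σ : ℕ → ℤ) (u v : ℕ → FreeGroup X) (w ε : FreeGroup X) : Prop :=
  toG X R ε = 1 ∧ ∀ i < k,
    (σ i = 1 ∧ σ ((i + 1) % k) = 1 → w * ε * u i * w⁻¹ = v i) ∧
    (σ i = 1 ∧ σ ((i + 1) % k) = -1 → w * ε * u i * ε⁻¹ * w⁻¹ = v i) ∧
    (σ i = -1 ∧ σ ((i + 1) % k) = 1 → w * u i * w⁻¹ = v i) ∧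
    (σ i = -1 ∧ σ ((i + 1) % k) = -1 → w * u i * ε⁻¹ * w⁻¹ = v i)

/-- Iso-computational list conjugacy `u ∼^σ v`. -/
def ICLC (k : ℕ) (σ : ℕ → ℤ) (u v : ℕ → FreeGroup X) : Prop :=
  ∃ w ε : FreeGroup X, IsICLCWitness X R k σ u v w ε

/-- `c_{k,σ}(u,v)`: the least `‖w‖` over witnessing pairs `(w, ε)` for `u ∼^σ v`. -/
def cList (k : ℕ) (σ : ℕ → ℤ) (u v : ℕ → FreeGroup X) : ℕ :=
  sInf {n | ∃ w ε : FreeGroup X, IsICLCWitness X R k σ u v w ε ∧ wlen w = n}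

/-- `C_{k,σ}(n)`. -/
def CC (k : ℕ) (σ : ℕ → ℤ) (n : ℕ) : ℕ :=
  sSup {d | ∃ u v : ℕ → FreeGroup X, ICLC X R k σ u v ∧
    (∑ i ∈ Finset.range k, (wlen (u i) + wlen (v i))) ≤ n - 2 * k ∧
    cList X R k σ u v = d}

/-- The alphabet `X ∪ {q}`. -/
abbrev Yt (X : Type) : Type := X ⊕ Unit

/-- The letter `q` in the free group `F(X ∪ {q})`. -/
def qY : FreeGroup (Yt X) := FreeGroup.of (Sum.inr ())

/-- A word on `X` as a word on `X ∪ {q}`. -/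
def embY : FreeGroup X →* FreeGroup (Yt X) := FreeGroup.map Sum.inl

/-- The element of `M(G)` represented by a word on `X ∪ {q}`. -/
def toMY : FreeGroup (Yt X) →* M X R :=
  (toM X R).comp (FreeGroup.map (Sum.elim Sum.inl fun u => Sum.inr (Sum.inr u)))

/-- The word `q^{σ₁}u₁q^{σ₂}u₂⋯q^{σ_k}u_k` on `X ∪ {q}` (`0`-based indexing). -/
def qword (k : ℕ) (σ : ℕ → ℤ) (u : ℕ → FreeGroup X) : FreeGroup (Yt X) :=
  ((List.range k).map fun i => qY X ^ σ i * embY X (u i)).prod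

/-- The word `q^{σ₁}u₁q^{σ₂}u₂⋯q^{σ_k}u_k` is (freely) reduced, expressed as:
its reduced length equals the sum of the lengths of its letters. -/
def ReducedForm (k : ℕ) (σ : ℕ → ℤ) (u : ℕ → FreeGroup X) : Prop :=
  wlen (qword X k σ u) = k + ∑ i ∈ Finset.range k, wlen (u i)

/-- The element `q^{σ₁}u₁q^{σ₂}u₂⋯q^{σ_k}u_k` of `M(G)`. -/
def qwordM (k : ℕ) (σ : ℕ → ℤ) (u : ℕ → FreeGroup X) : M X R :=
  toMY X R (qword X k σ u)

/-- `σ` is a tuple of signs `±1`. -/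
def IsSgn (k : ℕ) (σ : ℕ → ℤ) : Prop := ∀ i < k, σ i = 1 ∨ σ i = -1

/-- `D_{k,σ}(n)`: restriction of the conjugator length function of `M(G)` to conjugate
pairs `x = q^{σ₁}u₁⋯q^{σ_k}u_k`, `y = q^{σ₁}v₁⋯q^{σ_k}v_k` that are reduced words with
`∑ (‖u_i‖ + ‖v_i‖) ≤ n - 2k`. -/
def Dk (k : ℕ) (σ : ℕ → ℤ) (n : ℕ) : ℕ :=
  sSup {d | ∃ u v : ℕ → FreeGroup X,
    ReducedForm X k σ u ∧ ReducedForm X k σ v ∧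
    IsConj (qwordM X R k σ u) (qwordM X R k σ v) ∧
    (∑ i ∈ Finset.range k, (wlen (u i) + wlen (v i))) ≤ n - 2 * k ∧
    c X R (qwordM X R k σ u) (qwordM X R k σ v) = d}

/-- `D'_{k,σ}(n)`: as `D_{k,σ}(n)`, but for pairs conjugate via an element of `⟨X ∪ Θ⟩`
and with minimal conjugator length measured over conjugators in `⟨X ∪ Θ⟩`. -/
def Dk' (k : ℕ) (σ : ℕ → ℤ) (n : ℕ) : ℕ :=
  sSup {d | ∃ u v : ℕ → FreeGroup X,
    ReducedForm X k σ u ∧ ReducedForm X k σ v ∧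
    (∃ γ ∈ Hgrp X R, γ * qwordM X R k σ u * γ⁻¹ = qwordM X R k σ v) ∧
    (∑ i ∈ Finset.range k, (wlen (u i) + wlen (v i))) ≤ n - 2 * k ∧
    c' X R (qwordM X R k σ u) (qwordM X R k σ v) = d}

/-- `D₀(n)`: restriction of the conjugator length function of `M(G)` to pairs
`(qu, q)` with `u` a word on `X`, `qu` conjugate to `q`, and `‖u‖ ≤ n - 2`. -/
def D0 (n : ℕ) : ℕ :=
  sSup {d | ∃ u : FreeGroup X, wlen u ≤ n - 2 ∧
    IsConj (qM X R * embX X R u) (qM X R) ∧ c X R (qM X R * embX X R u) (qM X R) = d}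

/-- `D'₀(n)`: as `D₀(n)`, via conjugators in `⟨X ∪ Θ⟩`. -/
def D0' (n : ℕ) : ℕ :=
  sSup {d | ∃ u : FreeGroup X, wlen u ≤ n - 2 ∧
    (∃ γ ∈ Hgrp X R, γ * (qM X R * embX X R u) * γ⁻¹ = qM X R) ∧
    c' X R (qM X R * embX X R u) (qM X R) = d}

/-- The endomorphism `φ_α` of `F(X ∪ {q})`: it fixes each `x ∈ X` and sends `q` to
`α⁻¹qα` if `α ∈ X` and to `qα` if `α ∈ R`. -/
def phi (a : ThIdx X R) : FreeGroup (Yt X) →* FreeGroup (Yt X) :=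
  FreeGroup.lift fun s =>
    match s with
    | Sum.inl x => FreeGroup.of (Sum.inl x : Yt X)
    | Sum.inr _ =>
      match a with
      | Sum.inl x' => (FreeGroup.of (Sum.inl x' : Yt X))⁻¹ * qY X * FreeGroup.of (Sum.inl x')
      | Sum.inr r => qY X * embY X r.1

end

end Miller

namespace Statement8Aux

open Miller

section WlenLemmas

variable {β : Type}

lemma wlen_le {g : FreeGroup β} {l : List (β × Bool)} (h : FreeGroup.mk l = g) :
    wlen g ≤ l.length :=
  Nat.sInf_le ⟨l, h, rfl⟩

lemma exists_wlen_list (g : FreeGroup β) :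
    ∃ l : List (β × Bool), FreeGroup.mk l = g ∧ l.length = wlen g := by
  classical
  exact Nat.sInf_mem (s := {n | ∃ l : List (β × Bool), FreeGroup.mk l = g ∧ l.length = n})
    ⟨g.toWord.length, g.toWord, FreeGroup.mk_toWord, rfl⟩

lemma wlen_one : wlen (1 : FreeGroup β) = 0 :=
  Nat.le_zero.mp (wlen_le (FreeGroup.one_eq_mk (α := β)).symm)

lemma wlen_mul_le (g h : FreeGroup β) : wlen (g * h) ≤ wlen g + wlen h := by
  obtain ⟨l1, h1, e1⟩ := exists_wlen_list g
  obtain ⟨l2, h2, e2⟩ := exists_wlen_list h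
  calc wlen (g * h) ≤ (l1 ++ l2).length :=
        wlen_le (by rw [← FreeGroup.mul_mk, h1, h2])
    _ = wlen g + wlen h := by rw [List.length_append, e1, e2]

lemma wlen_of (x : β) : wlen (FreeGroup.of x) ≤ 1 :=
  wlen_le (l := [(x, true)]) rfl

lemma wlen_inv_of (x : β) : wlen (FreeGroup.of x)⁻¹ ≤ 1 := by
  refine wlen_le (l := [(x, false)]) ?_
  have : (FreeGroup.mk [(x, true)] : FreeGroup β)⁻¹ = FreeGroup.mk (FreeGroup.invRev [(x, true)]) :=
    FreeGroup.inv_mk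
  simp only [FreeGroup.of] at this ⊢
  rw [this]
  simp [FreeGroup.invRev]

end WlenLemmas

section MLemmas

variable (X : Type) (R : Finset (FreeGroup X))

lemma toM_eq {u v : FreeGroup (Gen X R)} (h : u * v⁻¹ ∈ rels X R) :
    toM X R u = toM X R v := by
  have h1 : toM X R (u * v⁻¹) = 1 :=
    (QuotientGroup.eq_one_iff _).mpr (Subgroup.subset_normalClosure h)
  rw [map_mul, map_inv] at h1
  exact mul_inv_eq_one.mp h1

lemma toG_rel {r : FreeGroup X} (h : r ∈ R) : toG X R r = 1 :=
  (QuotientGroup.eq_one_iff _).mpr (Subgroup.subset_normalClosure h)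

end MLemmas

end Statement8Aux

namespace Statement8Aux

open Miller

section RelLemmas

variable (X : Type) (R : Finset (FreeGroup X))

lemma theta_x_comm (a : ThIdx X R) (x : X) :
    θM X R a * xM X R x = xM X R x * θM X R a := by
  have h := toM_eq X R (u := θg X R a * xg X R x) (v := xg X R x * θg X R a)
    (Or.inl ⟨a, x, rfl⟩)
  simpa only [map_mul, θM, xM] using h

lemma embX_of (x : X) : embX X R (FreeGroup.of x) = xM X R x := by
  simp only [embX, ofX, MonoidHom.comp_apply, FreeGroup.map.of, xM, xg]

lemma embTh_of (a : ThIdx X R) : embTh X R (FreeGroup.of a) = θM X R a := by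
  simp only [embTh, MonoidHom.comp_apply, FreeGroup.map.of, θM, θg]

lemma theta_embX_comm (a : ThIdx X R) (u : FreeGroup X) :
    Commute (θM X R a) (embX X R u) := by
  induction u using FreeGroup.induction_on with
  | C1 => rw [map_one]; exact Commute.one_right _
  | of x =>
      have hp : (pure x : FreeGroup X) = FreeGroup.of x := rfl
      rw [embX_of]
      exact theta_x_comm X R a x
  | inv_of x ih => rw [map_inv]; exact ih.inv_right
  | mul u v ihu ihv => rw [map_mul]; exact ihu.mul_right ihv

lemma rel2raw (x : X) :
    θM X R (Sum.inl x) * xM X R x * qM X R = qM X R * xM X R x * θM X R (Sum.inl x) := by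
  have h := toM_eq X R (u := θg X R (Sum.inl x) * xg X R x * qg X R)
    (v := qg X R * xg X R x * θg X R (Sum.inl x)) (Or.inr (Or.inl ⟨x, rfl⟩))
  simpa only [map_mul, θM, xM, qM] using h

lemma rel3raw (r : {r : FreeGroup X // r ∈ R}) :
    θM X R (Sum.inr r) * qM X R = qM X R * embX X R r.1 * θM X R (Sum.inr r) := by
  have h := toM_eq X R (u := θg X R (Sum.inr r) * qg X R)
    (v := qg X R * ofX X R r.1 * θg X R (Sum.inr r)) (Or.inr (Or.inr ⟨r, rfl⟩))
  simpa only [map_mul, θM, qM, embX, MonoidHom.comp_apply] using h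

lemma conj1 (x : X) :
    θM X R (Sum.inl x) * qM X R * (θM X R (Sum.inl x))⁻¹ =
      (xM X R x)⁻¹ * qM X R * xM X R x := by
  set θ := θM X R (Sum.inl x)
  set xx := xM X R x
  set q := qM X R
  have h : θ * xx * q = q * xx * θ := rel2raw X R x
  have hc : θ * xx = xx * θ := theta_x_comm X R (Sum.inl x) x
  have h1 : θ * q = xx⁻¹ * (q * xx * θ) := by rw [← h, hc]; group
  rw [h1]; group

lemma conj2 (x : X) :
    (θM X R (Sum.inl x))⁻¹ * qM X R * θM X R (Sum.inl x) =
      xM X R x * qM X R * (xM X R x)⁻¹ := by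
  set θ := θM X R (Sum.inl x) with hθ
  set xx := xM X R x with hxx
  set q := qM X R with hq
  have e : θ * q * θ⁻¹ = xx⁻¹ * q * xx := conj1 X R x
  have hC : Commute θ xx := theta_x_comm X R (Sum.inl x) x
  have e2 : θ⁻¹ * (xx⁻¹ * q * xx) * θ = q := by rw [← e]; group
  have a1 : xx⁻¹ * θ⁻¹ = θ⁻¹ * xx⁻¹ := (hC.inv_left.inv_right.symm).eq
  have a2 : θ * xx = xx * θ := hC.eq
  have h4 : xx⁻¹ * (θ⁻¹ * q * θ) * xx = q := by
    calc xx⁻¹ * (θ⁻¹ * q * θ) * xx = (xx⁻¹ * θ⁻¹) * q * (θ * xx) := by group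
      _ = (θ⁻¹ * xx⁻¹) * q * (xx * θ) := by rw [a1, a2]
      _ = θ⁻¹ * (xx⁻¹ * q * xx) * θ := by group
      _ = q := e2
  calc θ⁻¹ * q * θ = xx * (xx⁻¹ * (θ⁻¹ * q * θ) * xx) * xx⁻¹ := by group
    _ = xx * q * xx⁻¹ := by rw [h4]

lemma conj3 (r : {r : FreeGroup X // r ∈ R}) :
    θM X R (Sum.inr r) * qM X R * (θM X R (Sum.inr r))⁻¹ =
      qM X R * embX X R r.1 := by
  rw [rel3raw X R r]; group

lemma conj4 (r : {r : FreeGroup X // r ∈ R}) :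
    (θM X R (Sum.inr r))⁻¹ * qM X R * θM X R (Sum.inr r) =
      qM X R * (embX X R r.1)⁻¹ := by
  set θ := θM X R (Sum.inr r)
  set rr := embX X R r.1
  set q := qM X R
  have e : θ * q * θ⁻¹ = q * rr := conj3 X R r
  have e2 : θ⁻¹ * (q * rr) = q * θ⁻¹ := by rw [← e]; group
  have hcc : θ⁻¹ * rr⁻¹ = rr⁻¹ * θ⁻¹ :=
    ((theta_embX_comm X R (Sum.inr r) r.1).inv_left.inv_right).eq
  calc θ⁻¹ * q * θ = (θ⁻¹ * (q * rr)) * (rr⁻¹ * θ) := by group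
    _ = q * θ⁻¹ * (rr⁻¹ * θ) := by rw [e2]
    _ = q * (θ⁻¹ * rr⁻¹) * θ := by group
    _ = q * (rr⁻¹ * θ⁻¹) * θ := by rw [hcc]
    _ = q * rr⁻¹ := by group

lemma conj_step {Mg : Type*} [Group Mg] {θ q W E c : Mg}
    (hW : Commute θ W) (hE : Commute θ E) (hq : θ * q * θ⁻¹ = c) :
    θ * (W⁻¹ * q * W * E) * θ⁻¹ = W⁻¹ * (c * (W * E)) := by
  have h1 : θ * W⁻¹ = W⁻¹ * θ := hW.inv_right.eq
  have h2 : (W * E) * θ⁻¹ = θ⁻¹ * (W * E) := ((hW.mul_right hE).inv_left.symm).eq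
  calc θ * (W⁻¹ * q * W * E) * θ⁻¹ = (θ * W⁻¹) * (q * ((W * E) * θ⁻¹)) := by group
    _ = (W⁻¹ * θ) * (q * (θ⁻¹ * (W * E))) := by rw [h1, h2]
    _ = W⁻¹ * ((θ * q * θ⁻¹) * (W * E)) := by group
    _ = W⁻¹ * (c * (W * E)) := by rw [hq]

end RelLemmas

end Statement8Aux

namespace Statement8Aux

open Miller

variable (X : Type) (R : Finset (FreeGroup X))

lemma mk_single_true {β : Type} (a : β) :
    FreeGroup.mk [(a, true)] = FreeGroup.of a := rfl

lemma mk_single_false {β : Type} (a : β) :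
    FreeGroup.mk [(a, false)] = (FreeGroup.of a)⁻¹ := by
  rw [FreeGroup.of, FreeGroup.inv_mk]
  simp [FreeGroup.invRev]

lemma list_step : ∀ l : List (ThIdx X R × Bool),
    ∃ w ε : FreeGroup X, toG X R ε = 1 ∧
      embTh X R (FreeGroup.mk l) * qM X R * (embTh X R (FreeGroup.mk l))⁻¹ =
        (embX X R w)⁻¹ * qM X R * embX X R w * embX X R ε ∧
      wlen w ≤ l.length := by
  intro l
  induction l with
  | nil =>
      refine ⟨1, 1, map_one _, ?_, by simp [wlen_one]⟩
      rw [← FreeGroup.one_eq_mk]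
      simp
  | cons p l ih =>
      obtain ⟨w, ε, hε, heq, hlen⟩ := ih
      obtain ⟨a, b⟩ := p
      have hm : FreeGroup.mk ((a, b) :: l) = FreeGroup.mk [(a, b)] * FreeGroup.mk l := by
        rw [FreeGroup.mul_mk, List.singleton_append]
      rcases b with _ | _
      · -- b = false : conjugator is (θM a)⁻¹
        have h0 : embTh X R (FreeGroup.mk [(a, false)]) = (θM X R a)⁻¹ := by
          rw [mk_single_false, map_inv, embTh_of]
        rcases a with x | r
        · -- θ_x⁻¹ : w' = (of x)⁻¹ * w
          refine ⟨(FreeGroup.of x)⁻¹ * w, ε, hε, ?_, ?_⟩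
          · calc embTh X R (FreeGroup.mk ((Sum.inl x, false) :: l)) * qM X R *
                  (embTh X R (FreeGroup.mk ((Sum.inl x, false) :: l)))⁻¹
                = (θM X R (Sum.inl x))⁻¹ *
                    (embTh X R (FreeGroup.mk l) * qM X R * (embTh X R (FreeGroup.mk l))⁻¹) *
                    ((θM X R (Sum.inl x))⁻¹)⁻¹ := by
                  rw [hm, map_mul, h0]; group
              _ = (θM X R (Sum.inl x))⁻¹ *
                    ((embX X R w)⁻¹ * qM X R * embX X R w * embX X R ε) *
                    ((θM X R (Sum.inl x))⁻¹)⁻¹ := by rw [heq]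
              _ = (embX X R w)⁻¹ *
                    ((xM X R x * qM X R * (xM X R x)⁻¹) * (embX X R w * embX X R ε)) :=
                  conj_step ((theta_embX_comm X R _ w).inv_left)
                    ((theta_embX_comm X R _ ε).inv_left)
                    (by rw [inv_inv]; exact conj2 X R x)
              _ = (embX X R ((FreeGroup.of x)⁻¹ * w))⁻¹ * qM X R *
                    embX X R ((FreeGroup.of x)⁻¹ * w) * embX X R ε := by
                  rw [map_mul, map_inv, embX_of]; group
          · refine le_trans (wlen_mul_le _ _) ?_
            have h1 := wlen_inv_of (β := X) x
            simp only [List.length_cons]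
            omega
        · -- θ_r⁻¹ : ε' = w⁻¹ * r⁻¹ * w * ε
          refine ⟨w, w⁻¹ * (r.1)⁻¹ * w * ε, ?_, ?_, ?_⟩
          · simp [map_mul, map_inv, toG_rel X R r.2, hε]
          · calc embTh X R (FreeGroup.mk ((Sum.inr r, false) :: l)) * qM X R *
                  (embTh X R (FreeGroup.mk ((Sum.inr r, false) :: l)))⁻¹
                = (θM X R (Sum.inr r))⁻¹ *
                    (embTh X R (FreeGroup.mk l) * qM X R * (embTh X R (FreeGroup.mk l))⁻¹) *
                    ((θM X R (Sum.inr r))⁻¹)⁻¹ := by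
                  rw [hm, map_mul, h0]; group
              _ = (θM X R (Sum.inr r))⁻¹ *
                    ((embX X R w)⁻¹ * qM X R * embX X R w * embX X R ε) *
                    ((θM X R (Sum.inr r))⁻¹)⁻¹ := by rw [heq]
              _ = (embX X R w)⁻¹ *
                    ((qM X R * (embX X R r.1)⁻¹) * (embX X R w * embX X R ε)) :=
                  conj_step ((theta_embX_comm X R _ w).inv_left)
                    ((theta_embX_comm X R _ ε).inv_left)
                    (by rw [inv_inv]; exact conj4 X R r)
              _ = (embX X R w)⁻¹ * qM X R * embX X R w *
                    embX X R (w⁻¹ * (r.1)⁻¹ * w * ε) := by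
                  simp only [map_mul, map_inv]; group
          · exact le_trans hlen (by simp)
      · -- b = true : conjugator is θM a
        have h0 : embTh X R (FreeGroup.mk [(a, true)]) = θM X R a := by
          rw [mk_single_true, embTh_of]
        rcases a with x | r
        · -- θ_x : w' = of x * w
          refine ⟨FreeGroup.of x * w, ε, hε, ?_, ?_⟩
          · calc embTh X R (FreeGroup.mk ((Sum.inl x, true) :: l)) * qM X R *
                  (embTh X R (FreeGroup.mk ((Sum.inl x, true) :: l)))⁻¹
                = θM X R (Sum.inl x) *
                    (embTh X R (FreeGroup.mk l) * qM X R * (embTh X R (FreeGroup.mk l))⁻¹) *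
                    (θM X R (Sum.inl x))⁻¹ := by
                  rw [hm, map_mul, h0]; group
              _ = θM X R (Sum.inl x) *
                    ((embX X R w)⁻¹ * qM X R * embX X R w * embX X R ε) *
                    (θM X R (Sum.inl x))⁻¹ := by rw [heq]
              _ = (embX X R w)⁻¹ *
                    (((xM X R x)⁻¹ * qM X R * xM X R x) * (embX X R w * embX X R ε)) :=
                  conj_step (theta_embX_comm X R _ w) (theta_embX_comm X R _ ε)
                    (conj1 X R x)
              _ = (embX X R (FreeGroup.of x * w))⁻¹ * qM X R *
                    embX X R (FreeGroup.of x * w) * embX X R ε := by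
                  rw [map_mul, embX_of]; group
          · refine le_trans (wlen_mul_le _ _) ?_
            have h1 := wlen_of (β := X) x
            simp only [List.length_cons]
            omega
        · -- θ_r : ε' = w⁻¹ * r * w * ε
          refine ⟨w, w⁻¹ * r.1 * w * ε, ?_, ?_, ?_⟩
          · simp [map_mul, map_inv, toG_rel X R r.2, hε]
          · calc embTh X R (FreeGroup.mk ((Sum.inr r, true) :: l)) * qM X R *
                  (embTh X R (FreeGroup.mk ((Sum.inr r, true) :: l)))⁻¹
                = θM X R (Sum.inr r) *
                    (embTh X R (FreeGroup.mk l) * qM X R * (embTh X R (FreeGroup.mk l))⁻¹) *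
                    (θM X R (Sum.inr r))⁻¹ := by
                  rw [hm, map_mul, h0]; group
              _ = θM X R (Sum.inr r) *
                    ((embX X R w)⁻¹ * qM X R * embX X R w * embX X R ε) *
                    (θM X R (Sum.inr r))⁻¹ := by rw [heq]
              _ = (embX X R w)⁻¹ *
                    ((qM X R * embX X R r.1) * (embX X R w * embX X R ε)) :=
                  conj_step (theta_embX_comm X R _ w) (theta_embX_comm X R _ ε)
                    (conj3 X R r)
              _ = (embX X R w)⁻¹ * qM X R * embX X R w *
                    embX X R (w⁻¹ * r.1 * w * ε) := by
                  simp only [map_mul, map_inv]; group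
          · exact le_trans hlen (by simp)

end Statement8Aux


open Miller in
/-- For any `τ₀` in the subgroup `⟨Θ⟩` of `M(G)` (a word in the letters
`Θ`, on which `⟨Θ⟩` is free), there exist words `w` and `ε` over `X` such that `ε =_G 1`,
`τ₀ q τ₀⁻¹ =_{M(G)} w⁻¹ q w ε`, and `‖w‖ ≤ ‖τ₀‖. Consequently
`τ₀ q⁻¹ τ₀⁻¹ =_{M(G)} (wε)⁻¹ q⁻¹ w` for the same `w` and `ε`. -/
theorem statement8 (X : Type) [Fintype X] (R : Finset (FreeGroup X)) (hR : R.Nonempty)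
    (τ₀ : FreeGroup (ThIdx X R)) :
    ∃ w ε : FreeGroup X, toG X R ε = 1 ∧
      embTh X R τ₀ * qM X R * (embTh X R τ₀)⁻¹ =
        (embX X R w)⁻¹ * qM X R * embX X R w * embX X R ε ∧
      wlen w ≤ wlen τ₀ ∧
      embTh X R τ₀ * (qM X R)⁻¹ * (embTh X R τ₀)⁻¹ =
        (embX X R (w * ε))⁻¹ * (qM X R)⁻¹ * embX X R w := by
  obtain ⟨l, hl, hlen⟩ := Statement8Aux.exists_wlen_list τ₀
  obtain ⟨w, ε, hε, heq, hw⟩ := Statement8Aux.list_step X R l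
  rw [hl] at heq
  refine ⟨w, ε, hε, heq, hlen ▸ hw, ?_⟩
  have h1 : embTh X R τ₀ * (qM X R)⁻¹ * (embTh X R τ₀)⁻¹ =
      (embTh X R τ₀ * qM X R * (embTh X R τ₀)⁻¹)⁻¹ := by group
  rw [h1, heq, map_mul]
  group
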